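/- Let H = (V,F,z) be an undirected hypergraph with n = |V| and |f| ∈ (r/2, r] for every f ∈ F, and let G be its associated graph. Let S ⊆ F be a bundle of λ disjoint (log n)-hyperspanners. Then for every hyperedge f ∈ F∖S and every pair {u,v} ⊆ f with u ≠ v, z_f · R_G(u,v) ≤ 4·log n / (r·λ), where R_G(u,v) is the effective resistance of the pair (u,v) in G. -/

import Mathlib

open Finset

/-- A `u`–`v` hyperpath: a nonempty list of hyperedges whose first contains `u`, last
contains `v`, and consecutive hyperedges intersect. -/
def IsHyperpath {V α : Type*} (ed : α → Finset V) : V → V → List α → Prop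
  | _, _, [] => False
  | u, v, [f] => u ∈ ed f ∧ v ∈ ed f
  | u, v, f :: g :: L => u ∈ ed f ∧ ∃ w ∈ ed f, IsHyperpath ed w v (g :: L)

section Aux

lemma clique_bound {V : Type*} [DecidableEq V] (g : Finset V) (x : V → ℝ)
    {u v : V} (hu : u ∈ g) (hv : v ∈ g) :
    (g.card : ℝ) * (x u - x v) ^ 2 ≤ ∑ p ∈ g.offDiag, (x p.1 - x p.2) ^ 2 := by
  rcases eq_or_ne u v with rfl | hne
  · simp only [sub_self]
    have : (0:ℝ) ≤ ∑ p ∈ g.offDiag, (x p.1 - x p.2) ^ 2 := by positivity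
    simpa using this
  have hcard : 0 < (g.card : ℝ) := by exact_mod_cast Finset.card_pos.mpr ⟨u, hu⟩
  set m : ℝ := (∑ a ∈ g, x a) / g.card with hm
  have hsum0 : ∑ a ∈ g, (x a - m) = 0 := by
    rw [Finset.sum_sub_distrib, Finset.sum_const, nsmul_eq_mul, hm]
    field_simp
    ring
  have h1 : ∑ p ∈ g.offDiag, (x p.1 - x p.2) ^ 2 = ∑ p ∈ g ×ˢ g, (x p.1 - x p.2) ^ 2 := by
    apply Finset.sum_subset (fun p hp => by
      rw [Finset.mem_offDiag] at hp; exact Finset.mem_product.mpr ⟨hp.1, hp.2.1⟩)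
    intro p hp hp2
    rw [Finset.mem_product] at hp
    have : p.1 = p.2 := by
      by_contra h
      exact hp2 (Finset.mem_offDiag.mpr ⟨hp.1, hp.2, h⟩)
    simp [this]
  have h2 : ∑ p ∈ g ×ˢ g, (x p.1 - x p.2) ^ 2
      = 2 * g.card * ∑ a ∈ g, (x a - m) ^ 2 := by
    rw [Finset.sum_product]
    have key : ∀ a ∈ g, ∑ b ∈ g, (x a - x b) ^ 2
        = g.card * (x a - m)^2 + (∑ b ∈ g, (x b - m)^2) := by
      intro a _
      have expand : ∀ b ∈ g, (x a - x b)^2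
          = (x a - m)^2 + ((x b - m)^2) - (2*(x a - m))*(x b - m) := by intros; ring
      rw [Finset.sum_congr rfl expand, Finset.sum_sub_distrib, Finset.sum_add_distrib,
        Finset.sum_const, ← Finset.mul_sum, hsum0, nsmul_eq_mul, mul_zero, sub_zero]
    rw [Finset.sum_congr rfl key, Finset.sum_add_distrib, Finset.sum_const, nsmul_eq_mul,
      ← Finset.mul_sum]
    ring
  have h3 : (x u - m) ^ 2 + (x v - m) ^ 2 ≤ ∑ a ∈ g, (x a - m) ^ 2 := by
    have hsub : ({u, v} : Finset V) ⊆ g := by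
      intro a ha
      rcases Finset.mem_insert.mp ha with rfl | ha
      · exact hu
      · rw [Finset.mem_singleton] at ha; subst ha; exact hv
    calc (x u - m) ^ 2 + (x v - m) ^ 2 = ∑ a ∈ ({u, v} : Finset V), (x a - m) ^ 2 := by
          rw [Finset.sum_pair hne]
      _ ≤ ∑ a ∈ g, (x a - m) ^ 2 := by
          apply Finset.sum_le_sum_of_subset_of_nonneg hsub
          intros; positivity
  have h4 : (x u - x v) ^ 2 ≤ 2 * ((x u - m) ^ 2 + (x v - m) ^ 2) := by
    nlinarith [sq_nonneg (x u + x v - 2 * m)]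
  rw [h1, h2]
  nlinarith [h3, h4, hcard]

variable {V α : Type*} {ed : α → Finset V} {u v w : V} {f : α} {L : List α}

lemma isHyperpath_nil : ¬ IsHyperpath ed u v [] := id

lemma isHyperpath_head : IsHyperpath ed u v (f :: L) → u ∈ ed f := by
  cases L with
  | nil => exact fun h => h.1
  | cons g M => exact fun h => h.1

lemma isHyperpath_changeStart (hu : u ∈ ed f) :
    IsHyperpath ed w v (f :: L) → IsHyperpath ed u v (f :: L) := by
  cases L with
  | nil => exact fun h => ⟨hu, h.2⟩
  | cons g M => exact fun h => ⟨hu, h.2⟩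

lemma isHyperpath_suffix : ∀ (P Q : List α) (u : V), Q ≠ [] →
    IsHyperpath ed u v (P ++ Q) → ∃ w, IsHyperpath ed w v Q := by
  intro P
  induction P with
  | nil => exact fun Q u _ h => ⟨u, h⟩
  | cons f P' ih =>
    intro Q u hQ h
    rw [List.cons_append] at h
    have hne : P' ++ Q ≠ [] := fun he => hQ (List.append_eq_nil_iff.mp he).2
    obtain ⟨g, M, hPQ⟩ := List.exists_cons_of_ne_nil hne
    rw [hPQ] at h
    obtain ⟨-, w', -, hp⟩ := h
    rw [← hPQ] at hp
    exact ih Q w' hQ hp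

lemma exists_last_occ {a : α} : ∀ {l : List α}, a ∈ l → ∃ s t, l = s ++ a :: t ∧ a ∉ t := by
  intro l
  induction l with
  | nil => simp
  | cons b l' ih =>
    intro ha
    by_cases h : a ∈ l'
    · obtain ⟨s, t, hst, hat⟩ := ih h
      exact ⟨b :: s, t, by rw [hst]; rfl, hat⟩
    · have : a = b := by
        rcases List.mem_cons.mp ha with h' | h'
        · exact h'
        · exact absurd h' h
      exact ⟨[], l', by rw [this, List.nil_append], h⟩

lemma isHyperpath_dedup : ∀ (N : ℕ) (L : List α) (u : V), L.length ≤ N →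
    IsHyperpath ed u v L →
    ∃ L', L'.Sublist L ∧ L'.Nodup ∧ IsHyperpath ed u v L' := by
  intro N
  induction N with
  | zero =>
    intro L u hlen h
    match L with
    | [] => exact absurd h isHyperpath_nil
    | _ :: _ => simp at hlen
  | succ N ih =>
    intro L u hlen h
    match L with
    | [] => exact absurd h isHyperpath_nil
    | [f] => exact ⟨[f], List.Sublist.refl _, List.nodup_singleton f, h⟩
    | f :: g :: M =>
      have hu : u ∈ ed f := isHyperpath_head h
      by_cases hf : f ∈ g :: M
      · obtain ⟨C, D, hCD, hfD⟩ := exists_last_occ hf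
        have hpath2 : IsHyperpath ed u v ((f :: C) ++ (f :: D)) := by
          rw [List.cons_append, ← hCD]; exact h
        obtain ⟨w', hw'⟩ := isHyperpath_suffix (f :: C) (f :: D) u (by simp) hpath2
        have hpath3 : IsHyperpath ed u v (f :: D) := isHyperpath_changeStart hu hw'
        have hDsub : D.Sublist (g :: M) := by
          rw [hCD, show C ++ f :: D = (C ++ [f]) ++ D by simp]
          exact List.sublist_append_right (C ++ [f]) D
        have h1 : D.length ≤ M.length := by
          have := congrArg List.length hCD
          simp only [List.length_cons, List.length_append] at this
          omega
        have hlen2 : (f :: D).length ≤ N := by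
          simp only [List.length_cons] at hlen ⊢
          omega
        obtain ⟨L', hL'sub, hL'nd, hL'p⟩ := ih (f :: D) u hlen2 hpath3
        refine ⟨L', hL'sub.trans ?_, hL'nd, hL'p⟩
        exact List.Sublist.cons₂ f hDsub
      · obtain ⟨-, w', hw', hp⟩ := h
        have hlen2 : (g :: M).length ≤ N := by
          simp only [List.length_cons] at hlen ⊢; omega
        obtain ⟨L', hL'sub, hL'nd, hL'p⟩ := ih (g :: M) w' hlen2 hp
        match L', hL'p with
        | h' :: t', hL'p =>
          have hwh : w' ∈ ed h' := isHyperpath_head hL'p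
          refine ⟨f :: h' :: t', List.Sublist.cons₂ f hL'sub, ?_, ⟨hu, w', hw', hL'p⟩⟩
          refine List.nodup_cons.mpr ⟨fun hmem => hf (hL'sub.subset hmem), hL'nd⟩

lemma cs_step {a b A ca P C : ℝ} (hA : 0 ≤ A) (hca : 0 ≤ ca) (hP : 0 ≤ P) (hC : 0 ≤ C)
    (h1 : a ^ 2 ≤ A * ca) (h2 : b ^ 2 ≤ P * C) : (a + b) ^ 2 ≤ (A + P) * (ca + C) := by
  nlinarith [sq_nonneg (a - b), sq_nonneg (a + b), mul_nonneg hA hC, mul_nonneg hP hca,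
    sq_nonneg (A * C - P * ca), mul_nonneg (mul_nonneg hA hca) (mul_nonneg hP hC),
    sq_nonneg (a * b), mul_nonneg hA hca, mul_nonneg hP hC]

lemma path_cs (ed : α → Finset V) (z c : α → ℝ) (x : V → ℝ) :
    ∀ (L : List α) (u v : V), IsHyperpath ed u v L →
    (∀ g ∈ L, 0 ≤ c g) → (∀ g ∈ L, 0 < z g) →
    (∀ g ∈ L, ∀ a ∈ ed g, ∀ b ∈ ed g, (x a - x b) ^ 2 ≤ c g) →
    (x u - x v) ^ 2 ≤ ((L.map fun g => 1 / z g).sum) * ((L.map fun g => z g * c g).sum) := by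
  intro L
  induction L with
  | nil => intro u v h; exact absurd h id
  | cons f M ih =>
    intro u v h hc hzpos hbd
    have hzf : 0 < z f := hzpos f (List.mem_cons_self)
    have hcf : 0 ≤ c f := hc f (List.mem_cons_self)
    match M, h with
    | [], h =>
      obtain ⟨hu, hv⟩ := h
      simp only [List.map_cons, List.map_nil, List.sum_cons, List.sum_nil, add_zero]
      have := hbd f (List.mem_cons_self) u hu v hv
      calc (x u - x v) ^ 2 ≤ c f := this
        _ = 1 / z f * (z f * c f) := by field_simp
    | g :: M', h =>
      obtain ⟨hu, w, hw, hp⟩ := h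
      have ih' := ih w v hp (fun g hg => hc g (List.mem_cons_of_mem f hg))
        (fun g hg => hzpos g (List.mem_cons_of_mem f hg))
        (fun g hg => hbd g (List.mem_cons_of_mem f hg))
      have h1 : (x u - x w) ^ 2 ≤ (1 / z f) * (z f * c f) := by
        have := hbd f (List.mem_cons_self) u hu w hw
        calc (x u - x w) ^ 2 ≤ c f := this
          _ = 1 / z f * (z f * c f) := by field_simp
      have hP : 0 ≤ ((g :: M').map fun g => 1 / z g).sum := by
        apply List.sum_nonneg
        intro a ha
        obtain ⟨g', hg', rfl⟩ := List.mem_map.mp ha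
        have := hzpos g' (List.mem_cons_of_mem f hg')
        positivity
      have hC : 0 ≤ ((g :: M').map fun g => z g * c g).sum := by
        apply List.sum_nonneg
        intro a ha
        obtain ⟨g', hg', rfl⟩ := List.mem_map.mp ha
        have h1 := hzpos g' (List.mem_cons_of_mem f hg')
        have h2 := hc g' (List.mem_cons_of_mem f hg')
        positivity
      simp only [List.map_cons, List.sum_cons]
      have key := cs_step (by positivity) (by positivity) hP hC h1 ih'
      calc (x u - x v) ^ 2 = ((x u - x w) + (x w - x v)) ^ 2 := by ring_nf
        _ ≤ _ := key

end Aux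

/-- Let `H = (V,F,z)` be an undirected hypergraph with `n = |V|` and `|f| ∈ (r/2, r]` for
every hyperedge, and let `S = S₁ ⊎ … ⊎ S_λ` be a bundle of `λ` disjoint `(log n)`-hyperspanners
(each `Sⱼ` a `(log n)`-hyperspanner of the hypergraph with hyperedge set `F ∖ (S₁∪…∪S_{j−1})`).
Then, for every `f ∈ F ∖ S` and every pair of distinct `u, v ∈ f`, the effective resistance
`R_G(u,v) = sup {(x_u − x_v)² : xᵀ L_G x = 1}` in the associated graph `G` satisfies
`z_f · R_G(u,v) ≤ 4 log n / (r λ)`. -/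
theorem stmt13 {V α : Type*} [Fintype V] [DecidableEq V] [DecidableEq α]
    (n : ℕ) (hn : n = Fintype.card V) (hn2 : 2 ≤ n)
    (F : Finset α) (ed : α → Finset V) (z : α → ℝ) (hz : ∀ f ∈ F, 0 < z f)
    (r : ℝ) (hr : ∀ f ∈ F, r / 2 < ((ed f).card : ℝ) ∧ ((ed f).card : ℝ) ≤ r)
    (lam : ℕ) (hlam : 0 < lam)
    (Sj : Fin lam → Finset α) (hSjF : ∀ j, Sj j ⊆ F)
    (hdisj : ∀ j j', j ≠ j' → Disjoint (Sj j) (Sj j'))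
    (S : Finset α) (hS : S = Finset.univ.biUnion Sj)
    (hspan : ∀ j : Fin lam,
      ∀ f ∈ F \ ((Finset.univ.filter fun j' => j' < j).biUnion Sj),
        ∀ u ∈ ed f, ∀ v ∈ ed f, u ≠ v →
          ∃ L : List α, (∀ g ∈ L, g ∈ Sj j) ∧ IsHyperpath ed u v L ∧
            (L.map fun g => 1 / z g).sum ≤ Real.log n / z f) :
    ∀ f ∈ F \ S, ∀ u ∈ ed f, ∀ v ∈ ed f, u ≠ v →
      z f * sSup {t : ℝ | ∃ x : V → ℝ,
          (∑ g ∈ F, (1 / 2) * ∑ p ∈ (ed g).offDiag, z g * (x p.1 - x p.2) ^ 2) = 1 ∧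
          t = (x u - x v) ^ 2} ≤
        4 * Real.log n / (r * lam) := by
  intro f hf u hu v hv huv
  obtain ⟨hfF, hfS⟩ := Finset.mem_sdiff.mp hf
  have hzf : 0 < z f := hz f hfF
  have hcardf : (1:ℝ) ≤ ((ed f).card : ℝ) := by
    exact_mod_cast Finset.card_pos.mpr ⟨u, hu⟩
  have hrpos : 0 < r := lt_of_lt_of_le (by linarith) (hr f hfF).2
  have hlog : 0 < Real.log n := Real.log_pos (by exact_mod_cast hn2)
  have hlam' : 0 < (lam : ℝ) := by exact_mod_cast hlam
  have hBz : 0 ≤ 4 * Real.log n / (r * lam) / z f := by positivity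
  rw [mul_comm, ← le_div_iff₀ hzf]
  apply Real.sSup_le _ hBz
  rintro t ⟨x, hform, rfl⟩
  set Q : α → ℝ := fun g => ∑ p ∈ (ed g).offDiag, (x p.1 - x p.2) ^ 2 with hQ
  set c : α → ℝ := fun g => (1 / ((ed g).card : ℝ)) * Q g with hcdef
  have hQnn : ∀ g, 0 ≤ Q g := fun g => Finset.sum_nonneg fun p _ => sq_nonneg _
  have hcnn : ∀ g, 0 ≤ c g := fun g => by
    have := hQnn g; rw [hcdef]; positivity
  have hcbd : ∀ g, ∀ a ∈ ed g, ∀ b ∈ ed g, (x a - x b) ^ 2 ≤ c g := by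
    intro g a ha b hb
    have hcard : 0 < ((ed g).card : ℝ) := by exact_mod_cast Finset.card_pos.mpr ⟨a, ha⟩
    have hcb := clique_bound (ed g) x ha hb
    simp only [hcdef]
    rw [one_div, inv_mul_eq_div, le_div_iff₀ hcard]
    calc (x a - x b) ^ 2 * ((ed g).card : ℝ) = ((ed g).card : ℝ) * (x a - x b) ^ 2 := by ring
      _ ≤ Q g := hcb
  have htot : ∑ g ∈ F, z g * Q g = 2 := by
    have h1 : ∑ g ∈ F, (1 / 2) * (z g * Q g) = 1 := by
      have e : ∀ g ∈ F, (1 / 2 : ℝ) * (z g * Q g)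
          = 1 / 2 * ∑ p ∈ (ed g).offDiag, z g * (x p.1 - x p.2) ^ 2 := by
        intro g _
        simp only [hQ]
        rw [Finset.mul_sum]
      rw [Finset.sum_congr rfl e, hform]
    calc ∑ g ∈ F, z g * Q g = 2 * ∑ g ∈ F, (1 / 2) * (z g * Q g) := by
          rw [Finset.mul_sum]; apply Finset.sum_congr rfl; intros; ring
      _ = 2 := by rw [h1]; norm_num
  have hj : ∀ j : Fin lam, (x u - x v) ^ 2
      ≤ (Real.log n / z f) * ((2 / r) * ∑ g ∈ Sj j, z g * Q g) := by
    intro j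
    have hfmem : f ∈ F \ ((Finset.univ.filter fun j' => j' < j).biUnion Sj) := by
      refine Finset.mem_sdiff.mpr ⟨hfF, fun hmem => ?_⟩
      obtain ⟨j', _, hfj'⟩ := Finset.mem_biUnion.mp hmem
      exact hfS (hS ▸ Finset.mem_biUnion.mpr ⟨j', Finset.mem_univ j', hfj'⟩)
    obtain ⟨L, hLS, hLp, hLsum⟩ := hspan j f hfmem u hu v hv huv
    obtain ⟨L', hsub, hnd, hp'⟩ := isHyperpath_dedup L.length L u le_rfl hLp
    have hL'S : ∀ g ∈ L', g ∈ Sj j := fun g hg => hLS g (hsub.subset hg)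
    have hzL' : ∀ g ∈ L', 0 < z g := fun g hg => hz g (hSjF j (hL'S g hg))
    have key := path_cs ed z c x L' u v hp' (fun g _ => hcnn g) hzL'
      (fun g _ => hcbd g)
    have hS1 : ((L'.map fun g => 1 / z g).sum) ≤ Real.log n / z f := by
      refine le_trans (List.Sublist.sum_le_sum (hsub.map _) ?_) hLsum
      intro a ha
      obtain ⟨g, hg, rfl⟩ := List.mem_map.mp ha
      have := hz g (hSjF j (hLS g hg))
      positivity
    have hS2 : ((L'.map fun g => z g * c g).sum) ≤ (2 / r) * ∑ g ∈ Sj j, z g * Q g := by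
      rw [← List.sum_toFinset _ hnd]
      have step1 : ∑ g ∈ L'.toFinset, z g * c g
          ≤ ∑ g ∈ L'.toFinset, (2 / r) * (z g * Q g) := by
        apply Finset.sum_le_sum
        intro g hg
        have hg' := List.mem_toFinset.mp hg
        have hgF := hSjF j (hL'S g hg')
        have hcardg := (hr g hgF).1
        have hzg := hz g hgF
        have hcpos : 0 < ((ed g).card : ℝ) := by linarith
        have hdiv : (1:ℝ) / ((ed g).card : ℝ) ≤ 2 / r := by
          rw [div_le_div_iff₀ hcpos hrpos]; linarith
        have hQg := hQnn g
        calc z g * c g = (1 / ((ed g).card : ℝ)) * (z g * Q g) := by simp only [hcdef]; ring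
          _ ≤ (2 / r) * (z g * Q g) := by
              apply mul_le_mul_of_nonneg_right hdiv (by positivity)
      refine step1.trans ?_
      rw [Finset.mul_sum]
      apply Finset.sum_le_sum_of_subset_of_nonneg
      · intro g hg
        exact hL'S g (List.mem_toFinset.mp hg)
      · intro g hg _
        have hzg := hz g (hSjF j hg)
        have hQg := hQnn g
        positivity
    have hS2nn : 0 ≤ ((L'.map fun g => z g * c g).sum) := by
      apply List.sum_nonneg
      intro a ha
      obtain ⟨g, hg, rfl⟩ := List.mem_map.mp ha
      have := hzL' g hg
      have := hcnn g
      positivity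
    calc (x u - x v) ^ 2 ≤ _ := key
      _ ≤ (Real.log n / z f) * ((2 / r) * ∑ g ∈ Sj j, z g * Q g) :=
          mul_le_mul hS1 hS2 hS2nn (by positivity)
  have hsumj : (lam : ℝ) * (x u - x v) ^ 2
      ≤ (Real.log n / z f) * ((2 / r) * ∑ j : Fin lam, ∑ g ∈ Sj j, z g * Q g) := by
    calc (lam : ℝ) * (x u - x v) ^ 2 = ∑ _j : Fin lam, (x u - x v) ^ 2 := by
          rw [Finset.sum_const, Finset.card_univ, Fintype.card_fin, nsmul_eq_mul]
      _ ≤ ∑ j : Fin lam, (Real.log n / z f) * ((2 / r) * ∑ g ∈ Sj j, z g * Q g) :=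
          Finset.sum_le_sum fun j _ => hj j
      _ = _ := by rw [← Finset.mul_sum, ← Finset.mul_sum]
  have hSsum : ∑ j : Fin lam, ∑ g ∈ Sj j, z g * Q g ≤ 2 := by
    have hd : ((Finset.univ : Finset (Fin lam)) : Set (Fin lam)).PairwiseDisjoint Sj := by
      intro j _ j' _ hne
      exact hdisj j j' hne
    rw [← Finset.sum_biUnion hd]
    calc ∑ g ∈ Finset.univ.biUnion Sj, z g * Q g ≤ ∑ g ∈ F, z g * Q g := by
          apply Finset.sum_le_sum_of_subset_of_nonneg
          · intro g hg
            obtain ⟨j, _, hgj⟩ := Finset.mem_biUnion.mp hg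
            exact hSjF j hgj
          · intro g hg _
            have := hz g hg
            have := hQnn g
            positivity
      _ = 2 := htot
  have h4 : (lam : ℝ) * (x u - x v) ^ 2 ≤ 4 * Real.log n / (r * z f) := by
    refine hsumj.trans ?_
    have heq : (Real.log n / z f) * ((2 / r) * 2) = 4 * Real.log n / (r * z f) := by
      field_simp
      ring
    rw [← heq]
    apply mul_le_mul_of_nonneg_left _ (by positivity)
    apply mul_le_mul_of_nonneg_left hSsum (by positivity)
  rw [div_div, le_div_iff₀ (show (0:ℝ) < r * lam * z f by positivity)]
  rw [le_div_iff₀ (show (0:ℝ) < r * z f by positivity)] at h4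
  calc (x u - x v) ^ 2 * (r * (lam : ℝ) * z f) = (lam : ℝ) * (x u - x v) ^ 2 * (r * z f) := by
        ring
    _ ≤ 4 * Real.log n := h4
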